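/- Let A ∈ ℝ^{m×n} have nonnegative entries a_{ij}, let p ∈ ℝ^m, u ∈ ℝ^n, λ > 0, α ∈ ℝ, and let S ⊆ {1,…,m}. Form the augmented matrix Ã = [I_m √(2λ)A] ∈ ℝ^{m×(m+n)} and right-hand side p̃ = √(2λ)(p − Au) ∈ ℝ^m, and assume all row sums Σ_k ã_{ik} and all column sums Σ_{i∈S} ã_{ij} appearing below are nonzero. Then the SART update applied to (Ã, p̃) at x̃ = (y, z), namely x̃_j⁺ = x̃_j + α (Σ_{i∈S} ((p̃_i − Σ_k ã_{ik} x̃_k)/(Σ_k ã_{ik})) ã_{ij}) / (Σ_{i∈S} ã_{ij}), expressed in the variables y and x = z + u, equals: y_i⁺ = y_i + α (√(2λ)p_i − √(2λ)(Ax)_i − y_i)/(√(2λ)Σ_k a_{ik} + 1) for i ∈ S (with y_i unchanged for i ∉ S), and x_j⁺ = x_j + α (Σ_{i∈S} ((√(2λ)p_i − √(2λ)(Ax)_i − y_i)/(√(2λ)Σ_k a_{ik} + 1)) √(2λ)a_{ij}) / (√(2λ)Σ_{i∈S} a_{ij}) for j = 1,…,n. -/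

import Mathlib

open Finset

/-- The augmented matrix `Ã = [I_m  √(2λ)A] ∈ ℝ^{m×(m+n)}`. -/
noncomputable def sartAugMatrix {m n : ℕ} (A : Matrix (Fin m) (Fin n) ℝ) (lam : ℝ) :
    Matrix (Fin m) (Fin m ⊕ Fin n) ℝ :=
  fun i => Sum.elim (fun k => if i = k then (1 : ℝ) else 0)
    (fun j => Real.sqrt (2 * lam) * A i j)

/-- The augmented right-hand side `p̃ = √(2λ)(p − Au)`. -/
noncomputable def sartAugRhs {m n : ℕ} (A : Matrix (Fin m) (Fin n) ℝ)
    (p : Fin m → ℝ) (u : Fin n → ℝ) (lam : ℝ) : Fin m → ℝ :=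
  fun i => Real.sqrt (2 * lam) * (p i - A.mulVec u i)

/-- One SART update with subset `S` and relaxation `α` applied to the system `(B, q)`:
`x_j⁺ = x_j + α (Σ_{i∈S} ((q_i − Σ_k b_{ik} x_k)/(Σ_k b_{ik})) b_{ij}) / (Σ_{i∈S} b_{ij})`. -/
noncomputable def sartStep {m : ℕ} {ι : Type*} [Fintype ι]
    (B : Matrix (Fin m) ι ℝ) (q : Fin m → ℝ) (S : Finset (Fin m)) (α : ℝ)
    (x : ι → ℝ) : ι → ℝ :=
  fun j => x j +
    α * (∑ i ∈ S, ((q i - ∑ k, B i k * x k) / (∑ k, B i k)) * B i j) / (∑ i ∈ S, B i j)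

/-- The SART update applied to the augmented system
`[I √(2λ)A]·(y, z) = √(2λ)(p − Au)` at `x̃ = (y, z)` with `z = x − u`, expressed in the
variables `y` and `x = z + u`, gives the stated SART proximal update formulas. -/
theorem sart_prox_update
    (m n : ℕ) (A : Matrix (Fin m) (Fin n) ℝ) (p : Fin m → ℝ) (u : Fin n → ℝ)
    (lam α : ℝ) (hlam : 0 < lam) (hA : ∀ i j, 0 ≤ A i j) (S : Finset (Fin m))
    (hrow : ∀ i, (∑ k, sartAugMatrix A lam i k) ≠ 0)
    (hcol : ∀ j : Fin n, (∑ i ∈ S, sartAugMatrix A lam i (Sum.inr j)) ≠ 0)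
    (y : Fin m → ℝ) (x : Fin n → ℝ) :
    (∀ i ∈ S,
        sartStep (sartAugMatrix A lam) (sartAugRhs A p u lam) S α
            (Sum.elim y (fun j => x j - u j)) (Sum.inl i) =
          y i + α * (Real.sqrt (2 * lam) * p i - Real.sqrt (2 * lam) * A.mulVec x i - y i) /
            (Real.sqrt (2 * lam) * (∑ k, A i k) + 1)) ∧
    (∀ i ∉ S,
        sartStep (sartAugMatrix A lam) (sartAugRhs A p u lam) S α
            (Sum.elim y (fun j => x j - u j)) (Sum.inl i) = y i) ∧
    (∀ j : Fin n,
        sartStep (sartAugMatrix A lam) (sartAugRhs A p u lam) S α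
            (Sum.elim y (fun j => x j - u j)) (Sum.inr j) + u j =
          x j + α * (∑ i ∈ S,
              ((Real.sqrt (2 * lam) * p i - Real.sqrt (2 * lam) * A.mulVec x i - y i) /
                  (Real.sqrt (2 * lam) * (∑ k, A i k) + 1)) *
                (Real.sqrt (2 * lam) * A i j)) /
            (Real.sqrt (2 * lam) * ∑ i ∈ S, A i j)) := by
  set s := Real.sqrt (2 * lam) with hs
  have hrowsum : ∀ i, (∑ k, sartAugMatrix A lam i k) = s * (∑ k, A i k) + 1 := by
    intro i
    rw [Fintype.sum_sum_type]
    simp only [sartAugMatrix, Sum.elim_inl, Sum.elim_inr, Finset.sum_ite_eq,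
      Finset.mem_univ, if_true]
    rw [← Finset.mul_sum]
    ring
  have hdot : ∀ i, (∑ k, sartAugMatrix A lam i k * Sum.elim y (fun j => x j - u j) k)
      = y i + (s * A.mulVec x i - s * A.mulVec u i) := by
    intro i
    rw [Fintype.sum_sum_type]
    simp only [sartAugMatrix, Sum.elim_inl, Sum.elim_inr, ite_mul, one_mul, zero_mul,
      Finset.sum_ite_eq, Finset.mem_univ, if_true]
    simp only [Matrix.mulVec, dotProduct, mul_sub, Finset.sum_sub_distrib,
      Finset.mul_sum, mul_assoc]
    rfl
  have hres : ∀ i, (sartAugRhs A p u lam i -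
        ∑ k, sartAugMatrix A lam i k * Sum.elim y (fun j => x j - u j) k) /
        (∑ k, sartAugMatrix A lam i k)
      = (s * p i - s * A.mulVec x i - y i) / (s * (∑ k, A i k) + 1) := by
    intro i
    rw [hdot, hrowsum]
    simp only [sartAugRhs]
    rw [← hs]
    congr 1
    ring
  refine ⟨?_, ?_, ?_⟩
  · intro i hi
    simp only [sartStep, Sum.elim_inl, hres]
    have h1 : (∑ i' ∈ S, sartAugMatrix A lam i' (Sum.inl i)) = 1 := by
      simp [sartAugMatrix, Finset.sum_ite_eq', hi]
    have h2 : (∑ i' ∈ S, ((s * p i' - s * A.mulVec x i' - y i') /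
          (s * (∑ k, A i' k) + 1)) * sartAugMatrix A lam i' (Sum.inl i))
        = (s * p i - s * A.mulVec x i - y i) / (s * (∑ k, A i k) + 1) := by
      simp [sartAugMatrix, mul_ite, Finset.sum_ite_eq', hi]
    rw [h1, h2, div_one, mul_div_assoc]
  · intro i hi
    simp only [sartStep, Sum.elim_inl, hres]
    have h2 : (∑ i' ∈ S, ((s * p i' - s * A.mulVec x i' - y i') /
          (s * (∑ k, A i' k) + 1)) * sartAugMatrix A lam i' (Sum.inl i)) = 0 := by
      simp [sartAugMatrix, mul_ite, Finset.sum_ite_eq', hi]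
    rw [h2]
    simp
  · intro j
    simp only [sartStep, Sum.elim_inr, hres]
    have hB : ∀ i, sartAugMatrix A lam i (Sum.inr j) = s * A i j := fun i => rfl
    simp only [hB]
    rw [← Finset.mul_sum]
    ring
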